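/- Let d ∈ ℕ with d ≥ 5, let G : ℝ^d → ℝ be given by G(x) = ‖x‖^{2−d}, let ν be a measure on ℝ, and let φ : ℝ^d → ℝ be a smooth compactly supported function with φ ≥ 0 and φ(y) ≥ 1 for all y ∈ B_1(0). If ∫_ℝ ∫_{ℝ^d} min(1, (ρ·(G*φ)(x))²) λ^d(dx) ν(dρ) < ∞, then ∫_{|ρ| > 1} |ρ|^{d/(d−2)} ν(dρ) < ∞. -/

import Mathlib

open MeasureTheory ENNReal Filter Topology

open Metric Set

noncomputable section

/-- `ℝ^d` with the Euclidean structure. -/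
abbrev Rd (d : ℕ) := EuclideanSpace ℝ (Fin d)

/-- The distribution function `d_f(α) = λ^d {x : |f x| > α}`. -/
def distFun {d : ℕ} (f : Rd d → ℝ) (α : ℝ) : ℝ≥0∞ := volume {x | α < |f x|}

/-- The convolution `(φ * G)(x) = ∫ G(y) φ(x - y) dy`. -/
def conv {d : ℕ} (φ G : Rd d → ℝ) (x : Rd d) : ℝ := ∫ y, G y * φ (x - y)

/-- `G_R(x) = ∫_{B_R(x)} |G(y)| dy`. -/
def ballInt {d : ℕ} (G : Rd d → ℝ) (R : ℝ) (x : Rd d) : ℝ := ∫ y in Metric.ball x R, |G y|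


lemma rieszFinite {d : ℕ} (hd : 3 ≤ d) (R : ℝ) :
    ∫⁻ y in ball (0 : Rd d) R, ENNReal.ofReal (‖y‖ ^ ((2:ℝ) - d)) < ⊤ := by
  have hd0 : (0:ℝ) < d := by positivity
  set s : ℝ := (2:ℝ) - d with hs
  have hsneg : s < 0 := by
    simp only [hs]
    have : (3:ℝ) ≤ d := by exact_mod_cast hd
    linarith
  set μ := (volume : Measure (Rd d)).restrict (ball 0 R) with hμ
  have hmeas : AEMeasurable (fun y : Rd d => ‖y‖ ^ s) μ := by fun_prop
  rw [lintegral_eq_lintegral_meas_le μ (Eventually.of_forall fun y => Real.rpow_nonneg (norm_nonneg _) _) hmeas]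
  have hsub : ∀ t : ℝ, 0 < t → {a : Rd d | t ≤ ‖a‖ ^ s} ⊆ closedBall 0 (t ^ s⁻¹) := by
    intro t ht a ha
    simp only [mem_setOf_eq] at ha
    have hane : a ≠ 0 := by
      rintro rfl
      rw [norm_zero, Real.zero_rpow hsneg.ne] at ha; linarith
    have hnorm : 0 < ‖a‖ := norm_pos_iff.mpr hane
    rw [mem_closedBall_zero_iff]
    exact (Real.le_rpow_inv_iff_of_neg hnorm ht hsneg).mpr ha
  calc ∫⁻ t in Ioi (0:ℝ), μ {a | t ≤ ‖a‖ ^ s}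
      ≤ ∫⁻ t in Ioc (0:ℝ) 1 ∪ Ioi 1, μ {a | t ≤ ‖a‖ ^ s} := lintegral_mono_set Ioi_subset_Ioc_union_Ioi
    _ ≤ (∫⁻ t in Ioc (0:ℝ) 1, μ {a | t ≤ ‖a‖ ^ s}) + ∫⁻ t in Ioi 1, μ {a | t ≤ ‖a‖ ^ s} :=
        lintegral_union_le _ _ _
    _ < ⊤ := by
        refine ENNReal.add_lt_top.2 ⟨?_, ?_⟩
        · calc (∫⁻ t in Ioc (0:ℝ) 1, μ {a | t ≤ ‖a‖ ^ s})
              ≤ ∫⁻ _ in Ioc (0:ℝ) 1, volume (ball (0 : Rd d) R) := by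
                refine lintegral_mono fun t => ?_
                exact le_trans (measure_mono (subset_univ _)) (by simp [hμ, Measure.restrict_apply_univ])
            _ < ⊤ := by
                rw [setLIntegral_const]
                exact ENNReal.mul_lt_top measure_ball_lt_top (by simp)
        · have key : ∀ t : ℝ, t ∈ Ioi (1:ℝ) → μ {a | t ≤ ‖a‖ ^ s}
              ≤ ENNReal.ofReal (t ^ (s⁻¹ * d)) * volume (ball (0 : Rd d) 1) := by
            intro t ht
            have ht0 : (0:ℝ) < t := lt_trans one_pos ht
            calc μ {a | t ≤ ‖a‖ ^ s} ≤ volume (closedBall (0 : Rd d) (t ^ s⁻¹)) :=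
                  le_trans (le_trans (measure_mono (hsub t ht0)) (Measure.restrict_le_self _)) le_rfl
              _ = ENNReal.ofReal ((t ^ s⁻¹) ^ Module.finrank ℝ (Rd d)) * volume (ball (0 : Rd d) 1) :=
                  Measure.addHaar_closedBall _ _ (Real.rpow_nonneg ht0.le _)
              _ = ENNReal.ofReal (t ^ (s⁻¹ * d)) * volume (ball (0 : Rd d) 1) := by
                  rw [finrank_euclideanSpace_fin, ← Real.rpow_natCast (t ^ s⁻¹) d,
                    ← Real.rpow_mul ht0.le]
          calc ∫⁻ t in Ioi (1:ℝ), μ {a | t ≤ ‖a‖ ^ s}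
              ≤ ∫⁻ t in Ioi (1:ℝ), ENNReal.ofReal (t ^ (s⁻¹ * d)) * volume (ball (0 : Rd d) 1) :=
                setLIntegral_mono' measurableSet_Ioi key
            _ = (∫⁻ t in Ioi (1:ℝ), ENNReal.ofReal (t ^ (s⁻¹ * d))) * volume (ball (0 : Rd d) 1) :=
                lintegral_mul_const' _ _ measure_ball_lt_top.ne
            _ < ⊤ := by
                refine ENNReal.mul_lt_top ?_ measure_ball_lt_top
                refine IntegrableOn.setLIntegral_lt_top ?_
                refine integrableOn_Ioi_rpow_of_lt ?_ one_pos
                have h3 : (3:ℝ) ≤ d := by exact_mod_cast hd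
                rw [hs, inv_mul_eq_div, div_lt_iff_of_neg (by linarith)]
                linarith

lemma rieszLocInt {d : ℕ} (hd : 3 ≤ d) :
    LocallyIntegrable (fun y : Rd d => ‖y‖ ^ ((2:ℝ) - d)) volume := by
  rw [locallyIntegrable_iff]
  intro k hk
  obtain ⟨R, hR⟩ : ∃ R, k ⊆ ball (0 : Rd d) R := by
    obtain ⟨R, hR⟩ := hk.isBounded.subset_closedBall 0
    exact ⟨R + 1, hR.trans (closedBall_subset_ball (lt_add_one R))⟩
  refine IntegrableOn.mono_set ?_ hR
  constructor
  · exact (Measurable.aestronglyMeasurable (by fun_prop))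
  · rw [HasFiniteIntegral,
      lintegral_enorm_of_nonneg fun y => Real.rpow_nonneg (norm_nonneg _) _]
    exact rieszFinite hd R

lemma convIntegrand {d : ℕ} (hd : 3 ≤ d) {φ : Rd d → ℝ} (hφc : HasCompactSupport φ)
    (hφcont : Continuous φ) (x : Rd d) :
    Integrable (fun y : Rd d => ‖y‖ ^ ((2:ℝ) - d) * φ (x - y)) volume := by
  have := (hφc.convolutionExists_right (ContinuousLinearMap.mul ℝ ℝ)
    (rieszLocInt hd) hφcont) x
  simpa [ConvolutionExistsAt, ContinuousLinearMap.mul_apply'] using this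

def convG {d : ℕ} (φ : Rd d → ℝ) (x : Rd d) : ℝ :=
  ∫ y, ‖y‖ ^ ((2:ℝ) - d) * φ (x - y)

lemma convLower {d : ℕ} (hd : 3 ≤ d) {φ : Rd d → ℝ} (hφc : HasCompactSupport φ)
    (hφcont : Continuous φ) (hφ0 : ∀ y, 0 ≤ φ y)
    (hφ1 : ∀ y ∈ ball (0 : Rd d) 1, 1 ≤ φ y) (x : Rd d) :
    (volume (ball (0 : Rd d) 1)).toReal * (‖x‖ + 1) ^ ((2:ℝ) - d) ≤ convG φ x := by
  have hint := convIntegrand hd hφc hφcont x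
  have hd3 : (3:ℝ) ≤ d := by exact_mod_cast hd
  have hsle : ((2:ℝ) - d) ≤ 0 := by linarith
  have step1 : ∫ y in ball x 1, ‖y‖ ^ ((2:ℝ) - d) * φ (x - y) ≤ convG φ x :=
    setIntegral_le_integral hint (Eventually.of_forall fun y =>
      mul_nonneg (Real.rpow_nonneg (norm_nonneg _) _) (hφ0 _))
  have step2 : ∫ (_ : Rd d) in ball x 1, (‖x‖ + 1) ^ ((2:ℝ) - d)
      ≤ ∫ y in ball x 1, ‖y‖ ^ ((2:ℝ) - d) * φ (x - y) := by
    refine setIntegral_mono_on_ae (integrableOn_const measure_ball_lt_top.ne)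
      hint.integrableOn measurableSet_ball ?_
    haveI : Nonempty (Fin d) := ⟨⟨0, by omega⟩⟩
    have h0 : ∀ᵐ y : Rd d ∂volume, y ≠ 0 := by
      rw [ae_iff]
      have : {y : Rd d | ¬ y ≠ 0} = {0} := by ext y; simp
      rw [this]; exact measure_singleton 0
    filter_upwards [h0] with y hy hyball
    have hy0 : 0 < ‖y‖ := norm_pos_iff.mpr hy
    have hyx : ‖y‖ ≤ ‖x‖ + 1 := by
      have : dist y x < 1 := mem_ball.mp hyball
      have := norm_sub_norm_le y x
      rw [dist_eq_norm] at *
      linarith [norm_sub_norm_le y x]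
    have h1 : (‖x‖ + 1) ^ ((2:ℝ) - d) ≤ ‖y‖ ^ ((2:ℝ) - d) :=
      Real.rpow_le_rpow_of_nonpos hy0 hyx hsle
    have h2 : 1 ≤ φ (x - y) := by
      refine hφ1 _ ?_
      rw [mem_ball_zero_iff, ← dist_eq_norm, dist_comm]
      exact mem_ball.mp hyball
    calc (‖x‖ + 1) ^ ((2:ℝ) - d) ≤ ‖y‖ ^ ((2:ℝ) - d) := h1
      _ = ‖y‖ ^ ((2:ℝ) - d) * 1 := (mul_one _).symm
      _ ≤ ‖y‖ ^ ((2:ℝ) - d) * φ (x - y) := by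
          exact mul_le_mul_of_nonneg_left h2 (Real.rpow_nonneg (norm_nonneg _) _)
  have step3 : ∫ (_ : Rd d) in ball x 1, (‖x‖ + 1) ^ ((2:ℝ) - d)
      = (volume (ball (0 : Rd d) 1)).toReal * (‖x‖ + 1) ^ ((2:ℝ) - d) := by
    rw [setIntegral_const, measureReal_def, Measure.addHaar_ball_center, smul_eq_mul]
  linarith [step1, step2, step3.symm.le, step3.le]

/-- necessity of the moment condition for `G(x) = ‖x‖^{2-d}`, `d ≥ 5`:
if `∫∫ min(1, (ρ·(G*φ)(x))²) dx ν(dρ) < ∞` for a smooth compactly supported `φ ≥ 0`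
with `φ ≥ 1` on `B_1(0)`, then `∫_{|ρ|>1} |ρ|^{d/(d-2)} ν(dρ) < ∞`. -/
theorem statement19 {d : ℕ} (hd : 5 ≤ d) (ν : Measure ℝ)
    (φ : Rd d → ℝ) (hφsm : ContDiff ℝ (⊤ : ℕ∞) φ) (hφc : HasCompactSupport φ)
    (hφ0 : ∀ y, 0 ≤ φ y) (hφ1 : ∀ y ∈ Metric.ball (0 : Rd d) 1, 1 ≤ φ y)
    (h : ∫⁻ ρ, (∫⁻ x, min 1 (ENNReal.ofReal
        ((ρ * conv φ (fun y : Rd d => ‖y‖ ^ ((2 : ℝ) - d)) x) ^ 2))) ∂ν < ⊤) :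
    ∫⁻ ρ in {ρ : ℝ | 1 < |ρ|},
        ENNReal.ofReal (|ρ| ^ ((d : ℝ) / ((d : ℝ) - 2))) ∂ν < ⊤ := by
  have hd3 : 3 ≤ d := by omega
  have hdr : (3:ℝ) ≤ d := by exact_mod_cast hd3
  have hcv : conv φ (fun y : Rd d => ‖y‖ ^ ((2 : ℝ) - d)) = convG φ := rfl
  rw [hcv] at h
  set q : ℝ := (d : ℝ) / ((d : ℝ) - 2) with hq
  have hd2 : (2:ℝ) < d := by linarith
  have hne : (d:ℝ) - 2 ≠ 0 := by linarith
  have hq0 : 0 ≤ q := div_nonneg (by positivity) (by linarith)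
  set F : ℝ → ℝ≥0∞ := fun ρ => ∫⁻ x, min 1 (ENNReal.ofReal ((ρ * convG φ x) ^ 2)) with hF
  set a : ℝ := (volume (ball (0 : Rd d) 1)).toReal with ha
  have ha0 : 0 < a := ENNReal.toReal_pos (measure_ball_pos _ _ one_pos).ne' measure_ball_lt_top.ne
  have hconv : ∀ x : Rd d, a * (‖x‖ + 1) ^ ((2:ℝ) - d) ≤ convG φ x :=
    convLower hd3 hφc (hφsm.continuous) hφ0 hφ1
  have hsle : ((2:ℝ) - d) ≤ 0 := by linarith
  -- small regime
  set ε : ℝ≥0∞ := volume (ball (0 : Rd d) 1) *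
      min 1 (ENNReal.ofReal ((a * 2 ^ ((2:ℝ) - d)) ^ 2)) with hε
  have hε0 : 0 < ε := by
    refine ENNReal.mul_pos (measure_ball_pos _ _ one_pos).ne' ?_
    exact (lt_min one_pos (ENNReal.ofReal_pos.mpr (by positivity))).ne'
  have hεtop : ε ≠ ⊤ := by
    refine (ENNReal.mul_lt_top measure_ball_lt_top ?_).ne
    exact lt_of_le_of_lt (min_le_left _ _) one_lt_top
  have claim1 : ∀ ρ : ℝ, 1 ≤ |ρ| → ε ≤ F ρ := by
    intro ρ hρ
    have : ∀ x : Rd d, x ∈ ball (0 : Rd d) 1 →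
        min 1 (ENNReal.ofReal ((a * 2 ^ ((2:ℝ) - d)) ^ 2))
          ≤ min 1 (ENNReal.ofReal ((ρ * convG φ x) ^ 2)) := by
      intro x hx
      refine min_le_min le_rfl (ENNReal.ofReal_le_ofReal ?_)
      have hb : a * 2 ^ ((2:ℝ) - d) ≤ convG φ x := by
        refine le_trans ?_ (hconv x)
        refine mul_le_mul_of_nonneg_left ?_ ha0.le
        refine Real.rpow_le_rpow_of_nonpos (by positivity) ?_ hsle
        have := mem_ball_zero_iff.mp hx
        linarith
      have hb0 : 0 < a * 2 ^ ((2:ℝ) - d) := by positivity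
      have hρ2 : 1 ≤ ρ ^ 2 := by nlinarith [abs_nonneg ρ, sq_abs ρ]
      calc (a * 2 ^ ((2:ℝ) - d)) ^ 2 ≤ (convG φ x) ^ 2 := by
            exact pow_le_pow_left₀ hb0.le hb 2
        _ = 1 * (convG φ x) ^ 2 := (one_mul _).symm
        _ ≤ ρ ^ 2 * (convG φ x) ^ 2 := by
            exact mul_le_mul_of_nonneg_right hρ2 (sq_nonneg _)
        _ = (ρ * convG φ x) ^ 2 := (mul_pow _ _ _).symm
    calc ε = (∫⁻ _ in ball (0 : Rd d) 1,
          min 1 (ENNReal.ofReal ((a * 2 ^ ((2:ℝ) - d)) ^ 2))) := by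
          rw [setLIntegral_const, mul_comm, hε]
      _ ≤ ∫⁻ x in ball (0 : Rd d) 1, min 1 (ENNReal.ofReal ((ρ * convG φ x) ^ 2)) :=
          setLIntegral_mono' measurableSet_ball this
      _ ≤ F ρ := setLIntegral_le_lintegral _ _
  -- large regime
  set M : ℝ := 2 ^ ((d:ℝ) - 2) / a with hM
  have hM0 : 0 < M := by positivity
  set c2 : ℝ≥0∞ := ENNReal.ofReal (a ^ q / 2 ^ d) * volume (ball (0 : Rd d) 1) with hc2
  have hc20 : c2 ≠ 0 := by
    refine (ENNReal.mul_pos ?_ (measure_ball_pos _ _ one_pos).ne').ne'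
    exact (ENNReal.ofReal_pos.mpr (by positivity)).ne'
  have hc2top : c2 ≠ ⊤ :=
    (ENNReal.mul_lt_top ENNReal.ofReal_lt_top measure_ball_lt_top).ne
  have claim2 : ∀ ρ : ℝ, M ≤ |ρ| → c2 * ENNReal.ofReal (|ρ| ^ q) ≤ F ρ := by
    intro ρ hρ
    have hρ0 : 0 < |ρ| := lt_of_lt_of_le hM0 hρ
    set R : ℝ := (a * |ρ|) ^ (((d:ℝ) - 2)⁻¹) with hR
    have haρ : 0 < a * |ρ| := by positivity
    have hR2 : 2 ≤ R := by
      have h1 : (2:ℝ) ^ ((d:ℝ) - 2) ≤ a * |ρ| := by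
        rw [hM, div_le_iff₀ ha0] at hρ
        linarith [hρ]
      calc (2:ℝ) = ((2:ℝ) ^ ((d:ℝ) - 2)) ^ (((d:ℝ) - 2)⁻¹) := by
            rw [← Real.rpow_mul (by norm_num), mul_inv_cancel₀ (by linarith), Real.rpow_one]
        _ ≤ R := Real.rpow_le_rpow (by positivity) h1 (inv_nonneg.mpr (by linarith))
    have hR0 : 0 < R := by linarith
    have key : ∀ x : Rd d, x ∈ closedBall (0 : Rd d) (R / 2) →
        (1:ℝ≥0∞) ≤ min 1 (ENNReal.ofReal ((ρ * convG φ x) ^ 2)) := by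
      intro x hx
      refine le_min le_rfl ?_
      rw [ENNReal.one_le_ofReal]
      have hx1 : ‖x‖ + 1 ≤ R := by
        have := mem_closedBall_zero_iff.mp hx
        linarith
      have hRs : R ^ ((2:ℝ) - d) = (a * |ρ|)⁻¹ := by
        rw [hR, ← Real.rpow_mul haρ.le]
        rw [show (((d:ℝ) - 2)⁻¹ * ((2:ℝ) - d)) = -1 by
          rw [show (2:ℝ) - d = -((d:ℝ) - 2) by ring, mul_neg, inv_mul_cancel₀ hne]]
        rw [Real.rpow_neg_one]
      have h1 : (a * |ρ|)⁻¹ ≤ (‖x‖ + 1) ^ ((2:ℝ) - d) := by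
        rw [← hRs]
        exact Real.rpow_le_rpow_of_nonpos (by positivity) hx1 hsle
      have h2 : a * (a * |ρ|)⁻¹ ≤ convG φ x :=
        le_trans (mul_le_mul_of_nonneg_left h1 ha0.le) (hconv x)
      have h3 : |ρ|⁻¹ ≤ convG φ x := by
        rwa [mul_inv, ← mul_assoc, mul_inv_cancel₀ ha0.ne', one_mul] at h2
      have h4 : 1 ≤ |ρ| * convG φ x := by
        rw [← mul_inv_cancel₀ hρ0.ne']
        exact mul_le_mul_of_nonneg_left h3 (abs_nonneg ρ)
      calc (1:ℝ) = 1 ^ 2 := (one_pow 2).symm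
        _ ≤ (|ρ| * convG φ x) ^ 2 := pow_le_pow_left₀ one_pos.le h4 2
        _ = (ρ * convG φ x) ^ 2 := by rw [mul_pow, mul_pow, sq_abs]
    have hvol : volume (closedBall (0 : Rd d) (R / 2)) = c2 * ENNReal.ofReal (|ρ| ^ q) := by
      rw [Measure.addHaar_closedBall _ _ (by linarith : (0:ℝ) ≤ R / 2),
        finrank_euclideanSpace_fin]
      have hRd : (R / 2) ^ d = a ^ q * |ρ| ^ q / 2 ^ d := by
        rw [div_pow, hR, ← Real.rpow_natCast ((a * |ρ|) ^ (((d:ℝ) - 2)⁻¹)) d,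
          ← Real.rpow_mul haρ.le]
        rw [show (((d:ℝ) - 2)⁻¹ * d) = q by rw [hq, div_eq_mul_inv]; ring]
        rw [Real.mul_rpow ha0.le (abs_nonneg ρ)]
      rw [hRd, hc2]
      rw [show a ^ q * |ρ| ^ q / 2 ^ d = (a ^ q / 2 ^ d) * |ρ| ^ q by ring]
      rw [ENNReal.ofReal_mul (by positivity)]
      ring
    calc c2 * ENNReal.ofReal (|ρ| ^ q)
        = ∫⁻ _ in closedBall (0 : Rd d) (R / 2), (1:ℝ≥0∞) := by
          rw [setLIntegral_one, hvol]
      _ ≤ ∫⁻ x in closedBall (0 : Rd d) (R / 2),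
            min 1 (ENNReal.ofReal ((ρ * convG φ x) ^ 2)) :=
          setLIntegral_mono' measurableSet_closedBall key
      _ ≤ F ρ := setLIntegral_le_lintegral _ _
  -- combine
  set C : ℝ≥0∞ := max (ENNReal.ofReal (M ^ q) / ε) c2⁻¹ with hC
  have hCtop : C ≠ ⊤ := by
    have h1 : ENNReal.ofReal (M ^ q) / ε < ⊤ :=
      ENNReal.div_lt_top ENNReal.ofReal_ne_top hε0.ne'
    have h2 : c2⁻¹ < ⊤ := ENNReal.inv_lt_top.mpr (pos_iff_ne_zero.mpr hc20)
    exact (max_lt h1 h2).ne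
  have claim : ∀ ρ : ℝ, 1 < |ρ| → ENNReal.ofReal (|ρ| ^ q) ≤ C * F ρ := by
    intro ρ hρ
    rcases le_total (|ρ|) M with hle | hle
    · calc ENNReal.ofReal (|ρ| ^ q) ≤ ENNReal.ofReal (M ^ q) :=
          ENNReal.ofReal_le_ofReal (Real.rpow_le_rpow (abs_nonneg _) hle hq0)
        _ = (ENNReal.ofReal (M ^ q) / ε) * ε := (ENNReal.div_mul_cancel hε0.ne' hεtop).symm
        _ ≤ C * F ρ := mul_le_mul' (le_max_left _ _) (claim1 ρ hρ.le)
    · calc ENNReal.ofReal (|ρ| ^ q)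
          = c2⁻¹ * (c2 * ENNReal.ofReal (|ρ| ^ q)) := by
            rw [← mul_assoc, ENNReal.inv_mul_cancel hc20 hc2top, one_mul]
        _ ≤ c2⁻¹ * F ρ := mul_le_mul' le_rfl (claim2 ρ hle)
        _ ≤ C * F ρ := mul_le_mul' (le_max_right _ _) le_rfl
  have hS : MeasurableSet {ρ : ℝ | 1 < |ρ|} :=
    (isOpen_lt continuous_const continuous_abs).measurableSet
  calc ∫⁻ ρ in {ρ : ℝ | 1 < |ρ|}, ENNReal.ofReal (|ρ| ^ q) ∂ν
      = ∫⁻ ρ, ({ρ : ℝ | 1 < |ρ|}).indicator (fun ρ => ENNReal.ofReal (|ρ| ^ q)) ρ ∂ν :=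
        (lintegral_indicator hS _).symm
    _ ≤ ∫⁻ ρ, C * F ρ ∂ν := by
        refine lintegral_mono fun ρ => ?_
        by_cases hρ : ρ ∈ {ρ : ℝ | 1 < |ρ|}
        · rw [indicator_of_mem hρ]; exact claim ρ hρ
        · rw [indicator_of_notMem hρ]; exact zero_le
    _ = C * ∫⁻ ρ, F ρ ∂ν := lintegral_const_mul' _ _ hCtop
    _ < ⊤ := ENNReal.mul_lt_top (lt_top_iff_ne_top.mpr hCtop) h
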